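/- For every ε > 0, the set 𝒦_ε = {F ∈ 𝒮 : m(Indiff(F)) ≥ ε} is closed in (𝒮, dist), where m is the standard measure. -/

import Mathlib

open Set MeasureTheory Filter Topology

namespace SkewPaper

/-- A bi-infinite sequence over the alphabet `{1,…,N}` (modelled as `Fin N`) is allowed
by the 0-1 transition matrix `A`. -/
def Allowed {N : ℕ} (A : Fin N → Fin N → Bool) (ω : ℤ → Fin N) : Prop :=
  ∀ n : ℤ, A (ω n) (ω (n + 1)) = true

/-- The subshift of finite type `Σ ⊆ {1,…,N}^ℤ` determined by the transition matrix `A`,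
with the product (= metric `d(ω̄,ω) = 2^{-min{|n| : ω̄ₙ ≠ ωₙ}}`) topology. -/
abbrev Sig (N : ℕ) (A : Fin N → Fin N → Bool) : Type :=
  {ω : ℤ → Fin N // Allowed A ω}

variable {N : ℕ} {A : Fin N → Fin N → Bool}

/-- The left shift `σ : Σ → Σ`. -/
def shift (ω : Sig N A) : Sig N A :=
  ⟨fun n => ω.1 (n + 1), fun n => ω.2 (n + 1)⟩

/-- The inverse `σ⁻¹` of the left shift. -/
def shiftInv (ω : Sig N A) : Sig N A :=
  ⟨fun n => ω.1 (n - 1), fun n => by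
    show A (ω.1 (n - 1)) (ω.1 (n + 1 - 1)) = true
    have h := ω.2 (n - 1)
    have e1 : n - 1 + 1 = n := by ring
    have e2 : n + 1 - 1 = n := by ring
    rw [e1] at h; rw [e2]; exact h⟩

/-- Topological transitivity of the shift `σ` on `Σ`. -/
def ShiftTransitive (N : ℕ) (A : Fin N → Fin N → Bool) : Prop :=
  ∀ U V : Set (Sig N A), IsOpen U → IsOpen V → U.Nonempty → V.Nonempty →
    ∃ n : ℕ, ((shift (A := A))^[n] '' U ∩ V).Nonempty

/-- The class `𝒮` of skew products `F(ω,x) = (σω, f_ω(x))` over the subshift `Σ`,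
with fiber `I = [0,1]`.  The fiber maps `f_ω` (encoded as maps `ℝ → ℝ` whose behaviour
is prescribed on `I`) are orientation-preserving `C¹` diffeomorphisms sending `I`
strictly inside itself, with `C¹` inverses `fInv ω`, and `ω ↦ f_ω` is continuous in the
`C¹` sense. -/
structure SkewSys (N : ℕ) (A : Fin N → Fin N → Bool) where
  f : Sig N A → ℝ → ℝ
  fInv : Sig N A → ℝ → ℝ
  contDiff : ∀ ω, ContDiffOn ℝ 1 (f ω) (Icc 0 1)
  deriv_pos : ∀ ω, ∀ x ∈ Icc (0:ℝ) 1, 0 < derivWithin (f ω) (Icc 0 1) x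
  maps_in : ∀ ω, MapsTo (f ω) (Icc 0 1) (Ioo 0 1)
  leftInv : ∀ ω, ∀ x ∈ Icc (0:ℝ) 1, fInv ω (f ω x) = x
  inv_contDiff : ∀ ω, ContDiffOn ℝ 1 (fInv ω) (Icc 0 1)
  cont : ContinuousOn (fun p : Sig N A × ℝ => f p.1 p.2) (univ ×ˢ Icc 0 1)
  cont_deriv : ContinuousOn
    (fun p : Sig N A × ℝ => derivWithin (f p.1) (Icc 0 1) p.2) (univ ×ˢ Icc 0 1)
  inv_cont : ContinuousOn (fun p : Sig N A × ℝ => fInv p.1 p.2) (univ ×ˢ Icc 0 1)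
  inv_cont_deriv : ContinuousOn
    (fun p : Sig N A × ℝ => derivWithin (fInv p.1) (Icc 0 1) p.2) (univ ×ˢ Icc 0 1)

/-- The skew product map `F : Σ × ℝ → Σ × ℝ`, `(ω,x) ↦ (σω, f_ω(x))`. -/
def FMap (F : SkewSys N A) : Sig N A × ℝ → Sig N A × ℝ :=
  fun p => (shift p.1, F.f p.1 p.2)

/-- The phase space `Σ × I`, viewed inside `Σ × ℝ`. -/
def phaseSpace (N : ℕ) (A : Fin N → Fin N → Bool) : Set (Sig N A × ℝ) :=
  univ ×ˢ Icc 0 1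

/-- The graph of `γ` drifts up: `F(Γ) > Γ`, i.e. the graph function
`ω ↦ f_{σ⁻¹ω}(γ(σ⁻¹ω))` of `F(Γ)` is pointwise strictly above `γ`. -/
def DriftsUp (F : SkewSys N A) (γ : Sig N A → ℝ) : Prop :=
  ∀ ω, γ ω < F.f (shiftInv ω) (γ (shiftInv ω))

/-- The graph of `γ` drifts down: `F(Γ) < Γ`. -/
def DriftsDown (F : SkewSys N A) (γ : Sig N A → ℝ) : Prop :=
  ∀ ω, F.f (shiftInv ω) (γ (shiftInv ω)) < γ ω

/-- `Up(F)`: the set of points `p = (ω,x)` drifting up, i.e. such that there is a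
continuous `γ : Σ → I` whose graph drifts up with `γ(ω) < x < f_{σ⁻¹ω}(γ(σ⁻¹ω))`. -/
def Up (F : SkewSys N A) : Set (Sig N A × ℝ) :=
  {p | ∃ γ : Sig N A → ℝ, Continuous γ ∧ (∀ ω, γ ω ∈ Icc (0:ℝ) 1) ∧ DriftsUp F γ ∧
    γ p.1 < p.2 ∧ p.2 < F.f (shiftInv p.1) (γ (shiftInv p.1))}

/-- `Down(F)`: the set of points drifting down. -/
def Down (F : SkewSys N A) : Set (Sig N A × ℝ) :=
  {p | ∃ γ : Sig N A → ℝ, Continuous γ ∧ (∀ ω, γ ω ∈ Icc (0:ℝ) 1) ∧ DriftsDown F γ ∧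
    F.f (shiftInv p.1) (γ (shiftInv p.1)) < p.2 ∧ p.2 < γ p.1}

/-- The anchored set `Indiff(F) = (Σ × I) \ (Up(F) ∪ Down(F))`. -/
def Indiff (F : SkewSys N A) : Set (Sig N A × ℝ) :=
  phaseSpace N A \ (Up F ∪ Down F)

/-- The nonwandering set `Ω(F)`: points `p ∈ Σ × I` such that every neighborhood `U`
of `p` in `Σ × I` satisfies `F^n(U) ∩ U ≠ ∅` for some `n ≥ 1`. -/
def NonWandering (F : SkewSys N A) : Set (Sig N A × ℝ) :=
  {p | p ∈ phaseSpace N A ∧ ∀ U : Set (Sig N A × ℝ), IsOpen U → p ∈ U →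
    ∃ n : ℕ, 1 ≤ n ∧ ∃ q ∈ U ∩ phaseSpace N A, (FMap F)^[n] q ∈ U ∩ phaseSpace N A}

/-- The partial order `F ≺ F̃` on `𝒮`: `f_ω(x) < f̃_ω(x)` for all `ω ∈ Σ`, `x ∈ I`. -/
def Prec (F G : SkewSys N A) : Prop :=
  ∀ ω, ∀ x ∈ Icc (0:ℝ) 1, F.f ω x < G.f ω x

/-- A skew product is multistep if its fiber maps depend only on finitely many
coordinates `ω_{-m}, …, ω_m` of `ω`. -/
def Multistep (F : SkewSys N A) : Prop :=
  ∃ m : ℕ, ∀ ω ω' : Sig N A, (∀ n : ℤ, n.natAbs ≤ m → ω.1 n = ω'.1 n) → F.f ω = F.f ω'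

/-- The `C¹` distance `dist(F,F̃) = max_ω dist_{C¹}(f_ω^{±1}, f̃_ω^{±1})` on `𝒮`. -/
noncomputable def SDist (F G : SkewSys N A) : ℝ :=
  ⨆ p : Sig N A × Icc (0:ℝ) 1,
    max
      (max |F.f p.1 p.2 - G.f p.1 p.2|
        |derivWithin (F.f p.1) (Icc 0 1) p.2 - derivWithin (G.f p.1) (Icc 0 1) p.2|)
      (max |F.fInv p.1 p.2 - G.fInv p.1 p.2|
        |derivWithin (F.fInv p.1) (Icc 0 1) p.2 - derivWithin (G.fInv p.1) (Icc 0 1) p.2|)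

/-- The standard measure `m = μ × Leb` on `Σ × I` (with `Leb` Lebesgue measure
restricted to `I = [0,1]`). -/
noncomputable def stdMeasure (μ : Measure (Sig N A)) : Measure (Sig N A × ℝ) :=
  μ.prod (volume.restrict (Icc 0 1))

/-- A family `(F_τ)_{τ ∈ (a,b)}` in `𝒮` is monotone increasing if `F_{τ₁} ≺ F_{τ₂}`
whenever `τ₁ < τ₂`. -/
def MonoFam (F : ℝ → SkewSys N A) (a b : ℝ) : Prop :=
  ∀ τ₁ ∈ Ioo a b, ∀ τ₂ ∈ Ioo a b, τ₁ < τ₂ → Prec (F τ₁) (F τ₂)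

/-- A family `(F_τ)_{τ ∈ (a,b)}` in `𝒮` is continuous in `τ` for the metric `dist`. -/
def ContFam (F : ℝ → SkewSys N A) (a b : ℝ) : Prop :=
  ∀ τ ∈ Ioo a b, ∀ ε : ℝ, 0 < ε → ∃ δ > 0,
    ∀ τ' ∈ Ioo a b, |τ' - τ| < δ → SDist (F τ') (F τ) < ε

/-- The pushforward `Γ ↦ F(Γ)` on graph functions: the graph of `pushGraph F γ`,
namely `ω ↦ f_{σ⁻¹ω}(γ(σ⁻¹ω))`, is the image `F(Γ)` of the graph `Γ` of `γ`. -/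
def pushGraph (F : SkewSys N A) (γ : Sig N A → ℝ) : Sig N A → ℝ :=
  fun ω => F.f (shiftInv ω) (γ (shiftInv ω))

section Aux

variable {N : ℕ} {A : Fin N → Fin N → Bool}

instance : SecondCountableTopology (Sig N A) :=
  inferInstanceAs (SecondCountableTopology ↥{ω : ℤ → Fin N | Allowed A ω})

instance : OpensMeasurableSpace (Sig N A) :=
  inferInstanceAs (OpensMeasurableSpace ↥{ω : ℤ → Fin N | Allowed A ω})

instance : CompactSpace (Sig N A) := by
  suffices h : IsClosed {ω : ℤ → Fin N | Allowed A ω} by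
    exact isCompact_iff_compactSpace.mp h.isCompact
  have : {ω : ℤ → Fin N | Allowed A ω} =
      ⋂ n : ℤ, {ω : ℤ → Fin N | A (ω n) (ω (n + 1)) = true} := by
    ext ω; simp [Allowed]
  rw [this]
  refine isClosed_iInter fun n => ?_
  have hc : Continuous fun ω : ℤ → Fin N => A (ω n) (ω (n + 1)) := by
    have h : Continuous fun ω : ℤ → Fin N => ((ω n, ω (n + 1)) : Fin N × Fin N) :=
      (continuous_apply n).prodMk (continuous_apply (n + 1))
    exact (continuous_of_discreteTopology (f := fun q : Fin N × Fin N => A q.1 q.2)).comp h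
  exact isClosed_eq hc continuous_const

lemma shiftInv_continuous : Continuous (shiftInv : Sig N A → Sig N A) := by
  refine Continuous.subtype_mk ?_ _
  exact continuous_pi fun n => (continuous_apply (n - 1)).comp continuous_subtype_val

lemma cont_of_contOn {h : Sig N A × ℝ → ℝ}
    (hh : ContinuousOn h (univ ×ˢ Icc 0 1)) {X : Type*} [TopologicalSpace X]
    {u : X → Sig N A} {v : X → ℝ} (hu : Continuous u) (hv : Continuous v)
    (hmem : ∀ x, v x ∈ Icc (0:ℝ) 1) : Continuous fun x => h (u x, v x) :=
  hh.comp_continuous (hu.prodMk hv) fun x => ⟨mem_univ _, hmem x⟩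

lemma pushGraph_continuous (F : SkewSys N A) {γ : Sig N A → ℝ} (hγ : Continuous γ)
    (hγI : ∀ ω, γ ω ∈ Icc (0:ℝ) 1) : Continuous (pushGraph F γ) :=
  cont_of_contOn F.cont shiftInv_continuous (hγ.comp shiftInv_continuous)
    (fun ω => hγI (shiftInv ω))

lemma sdist_bound (F G : SkewSys N A) (ω : Sig N A) {x : ℝ} (hx : x ∈ Icc (0:ℝ) 1) :
    |F.f ω x - G.f ω x| ≤ SDist F G := by
  set φ : Sig N A × Icc (0:ℝ) 1 → ℝ := fun p =>
    max
      (max |F.f p.1 p.2 - G.f p.1 p.2|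
        |derivWithin (F.f p.1) (Icc 0 1) p.2 - derivWithin (G.f p.1) (Icc 0 1) p.2|)
      (max |F.fInv p.1 p.2 - G.fInv p.1 p.2|
        |derivWithin (F.fInv p.1) (Icc 0 1) p.2 - derivWithin (G.fInv p.1) (Icc 0 1) p.2|)
    with hφ
  have hb : BddAbove (range φ) := by
    have hφc : Continuous φ := by
      have h0 : ∀ x : Sig N A × Icc (0:ℝ) 1, ((x.2 : ℝ)) ∈ Icc (0:ℝ) 1 := fun x => x.2.2
      have hv : Continuous fun x : Sig N A × Icc (0:ℝ) 1 => (x.2 : ℝ) :=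
        continuous_subtype_val.comp continuous_snd
      have c1 := cont_of_contOn F.cont continuous_fst hv h0
      have c2 := cont_of_contOn G.cont continuous_fst hv h0
      have c3 := cont_of_contOn F.cont_deriv continuous_fst hv h0
      have c4 := cont_of_contOn G.cont_deriv continuous_fst hv h0
      have c5 := cont_of_contOn F.inv_cont continuous_fst hv h0
      have c6 := cont_of_contOn G.inv_cont continuous_fst hv h0
      have c7 := cont_of_contOn F.inv_cont_deriv continuous_fst hv h0
      have c8 := cont_of_contOn G.inv_cont_deriv continuous_fst hv h0
      exact (((c1.sub c2).abs.max (c3.sub c4).abs).max ((c5.sub c6).abs.max (c7.sub c8).abs))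
    exact (isCompact_range hφc).bddAbove
  have h1 : |F.f ω x - G.f ω x| ≤ φ (ω, ⟨x, hx⟩) :=
    le_trans (le_max_left _ _) (le_max_left _ _)
  exact h1.trans (le_ciSup hb (ω, ⟨x, hx⟩))

lemma up_isOpen (F : SkewSys N A) : IsOpen (Up F) := by
  have : Up F = ⋃ γ : {γ : Sig N A → ℝ //
      Continuous γ ∧ (∀ ω, γ ω ∈ Icc (0:ℝ) 1) ∧ DriftsUp F γ},
      {p : Sig N A × ℝ | γ.1 p.1 < p.2 ∧ p.2 < pushGraph F γ.1 p.1} := by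
    ext p
    constructor
    · rintro ⟨γ, h1, h2, h3, h4, h5⟩
      exact mem_iUnion.mpr ⟨⟨γ, h1, h2, h3⟩, h4, h5⟩
    · rintro hp
      obtain ⟨⟨γ, h1, h2, h3⟩, h4, h5⟩ := mem_iUnion.mp hp
      exact ⟨γ, h1, h2, h3, h4, h5⟩
  rw [this]
  refine isOpen_iUnion fun γ => ?_
  have hpg := pushGraph_continuous F γ.2.1 γ.2.2.1
  exact (isOpen_lt (γ.2.1.comp continuous_fst) continuous_snd).inter
    (isOpen_lt continuous_snd (hpg.comp continuous_fst))

lemma down_isOpen (F : SkewSys N A) : IsOpen (Down F) := by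
  have : Down F = ⋃ γ : {γ : Sig N A → ℝ //
      Continuous γ ∧ (∀ ω, γ ω ∈ Icc (0:ℝ) 1) ∧ DriftsDown F γ},
      {p : Sig N A × ℝ | pushGraph F γ.1 p.1 < p.2 ∧ p.2 < γ.1 p.1} := by
    ext p
    constructor
    · rintro ⟨γ, h1, h2, h3, h4, h5⟩
      exact mem_iUnion.mpr ⟨⟨γ, h1, h2, h3⟩, h4, h5⟩
    · rintro hp
      obtain ⟨⟨γ, h1, h2, h3⟩, h4, h5⟩ := mem_iUnion.mp hp
      exact ⟨γ, h1, h2, h3, h4, h5⟩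
  rw [this]
  refine isOpen_iUnion fun γ => ?_
  have hpg := pushGraph_continuous F γ.2.1 γ.2.2.1
  exact (isOpen_lt (hpg.comp continuous_fst) continuous_snd).inter
    (isOpen_lt continuous_snd (γ.2.1.comp continuous_fst))

lemma up_stable (F : SkewSys N A) {p : Sig N A × ℝ} (hp : p ∈ Up F) :
    ∃ r > 0, ∀ G : SkewSys N A, SDist G F < r → p ∈ Up G := by
  obtain ⟨γ, h1, h2, h3, h4, h5⟩ := hp
  have : Nonempty (Sig N A) := ⟨p.1⟩
  set g : Sig N A → ℝ := fun ω => F.f (shiftInv ω) (γ (shiftInv ω)) - γ ω with hg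
  have hgc : Continuous g := (pushGraph_continuous F h1 h2).sub h1
  obtain ⟨ω₀, -, hmin⟩ := isCompact_univ.exists_isMinOn univ_nonempty hgc.continuousOn
  have hc0 : 0 < g ω₀ := sub_pos.mpr (h3 ω₀)
  refine ⟨min (g ω₀) (F.f (shiftInv p.1) (γ (shiftInv p.1)) - p.2),
    lt_min hc0 (sub_pos.mpr h5), fun G hG => ?_⟩
  refine ⟨γ, h1, h2, fun ω => ?_, h4, ?_⟩
  · have hb := sdist_bound G F (shiftInv ω) (h2 (shiftInv ω))
    have hlt : |G.f (shiftInv ω) (γ (shiftInv ω)) - F.f (shiftInv ω) (γ (shiftInv ω))| < g ω :=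
      lt_of_le_of_lt hb (hG.trans_le ((min_le_left _ _).trans (hmin (mem_univ ω))))
    have := (abs_lt.mp hlt).1
    simp only [hg] at this ⊢
    linarith
  · have hb := sdist_bound G F (shiftInv p.1) (h2 (shiftInv p.1))
    have hlt : |G.f (shiftInv p.1) (γ (shiftInv p.1)) - F.f (shiftInv p.1) (γ (shiftInv p.1))|
        < F.f (shiftInv p.1) (γ (shiftInv p.1)) - p.2 :=
      lt_of_le_of_lt hb (hG.trans_le (min_le_right _ _))
    have := (abs_lt.mp hlt).1
    linarith

lemma down_stable (F : SkewSys N A) {p : Sig N A × ℝ} (hp : p ∈ Down F) :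
    ∃ r > 0, ∀ G : SkewSys N A, SDist G F < r → p ∈ Down G := by
  obtain ⟨γ, h1, h2, h3, h4, h5⟩ := hp
  have : Nonempty (Sig N A) := ⟨p.1⟩
  set g : Sig N A → ℝ := fun ω => γ ω - F.f (shiftInv ω) (γ (shiftInv ω)) with hg
  have hgc : Continuous g := h1.sub (pushGraph_continuous F h1 h2)
  obtain ⟨ω₀, -, hmin⟩ := isCompact_univ.exists_isMinOn univ_nonempty hgc.continuousOn
  have hc0 : 0 < g ω₀ := sub_pos.mpr (h3 ω₀)
  refine ⟨min (g ω₀) (p.2 - F.f (shiftInv p.1) (γ (shiftInv p.1))),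
    lt_min hc0 (sub_pos.mpr h4), fun G hG => ?_⟩
  refine ⟨γ, h1, h2, fun ω => ?_, ?_, h5⟩
  · have hb := sdist_bound G F (shiftInv ω) (h2 (shiftInv ω))
    have hlt : |G.f (shiftInv ω) (γ (shiftInv ω)) - F.f (shiftInv ω) (γ (shiftInv ω))| < g ω :=
      lt_of_le_of_lt hb (hG.trans_le ((min_le_left _ _).trans (hmin (mem_univ ω))))
    have := (abs_lt.mp hlt).2
    simp only [hg] at this ⊢
    linarith
  · have hb := sdist_bound G F (shiftInv p.1) (h2 (shiftInv p.1))
    have hlt : |G.f (shiftInv p.1) (γ (shiftInv p.1)) - F.f (shiftInv p.1) (γ (shiftInv p.1))|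
        < p.2 - F.f (shiftInv p.1) (γ (shiftInv p.1)) :=
      lt_of_le_of_lt hb (hG.trans_le (min_le_right _ _))
    have := (abs_lt.mp hlt).2
    linarith

end Aux

def EE {N : ℕ} {A : Fin N → Fin N → Bool} (G : SkewSys N A) : Set (Sig N A × ℝ) :=
  Up G ∪ Down G

lemma Indiff_eq {N : ℕ} {A : Fin N → Fin N → Bool} (G : SkewSys N A) :
    Indiff G = phaseSpace N A \ EE G := rfl

/-- For every `ε > 0`, the set `𝒦_ε = {F : m(Indiff(F)) ≥ ε}` is closed
in `(𝒮, dist)` (stated as sequential closedness for the metric `SDist`). -/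
theorem K_eps_closed {N : ℕ} {A : Fin N → Fin N → Bool} (hN : 2 ≤ N)
    (htrans : ShiftTransitive N A)
    (μ : Measure (Sig N A)) [IsProbabilityMeasure μ]
    (herg : Ergodic (shift : Sig N A → Sig N A) μ)
    (ε : ENNReal) (hε : 0 < ε)
    (F : SkewSys N A) (Fs : ℕ → SkewSys N A)
    (hmem : ∀ n, ε ≤ stdMeasure μ (Indiff (Fs n)))
    (hF : Tendsto (fun n => SDist (Fs n) F) atTop (𝓝 0)) :
    ε ≤ stdMeasure μ (Indiff F) := by
  classical
  set m := stdMeasure μ with hm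
  have hEmeas : ∀ G : SkewSys N A, MeasurableSet (EE G) := fun G =>
    ((up_isOpen G).union (down_isOpen G)).measurableSet
  have hm1 : m (phaseSpace N A) = 1 := by
    simp [hm, stdMeasure, phaseSpace, Measure.prod_prod, Measure.restrict_apply_self,
      Real.volume_Icc]
  have key : ∀ G : SkewSys N A, m (phaseSpace N A ∩ EE G) + m (Indiff G) = 1 := by
    intro G
    have h := measure_inter_add_diff (μ := m) (phaseSpace N A) (hEmeas G)
    rw [hm1] at h
    rw [Indiff_eq]
    exact h
  have hε1 : ε ≤ 1 := by
    refine (hmem 0).trans ?_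
    rw [← hm1]
    exact measure_mono diff_subset
  set D : ℕ → Set (Sig N A × ℝ) := fun k => phaseSpace N A ∩ ⋂ n ∈ Ici k, EE (Fs n) with hD
  have hsub : phaseSpace N A ∩ EE F ⊆ ⋃ k, D k := by
    rintro p ⟨hp1, hp2⟩
    have hstab : ∃ r > 0, ∀ G : SkewSys N A, SDist G F < r → p ∈ EE G := by
      rcases hp2 with h | h
      · obtain ⟨r, hr, hs⟩ := up_stable F h
        exact ⟨r, hr, fun G hG => Or.inl (hs G hG)⟩
      · obtain ⟨r, hr, hs⟩ := down_stable F h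
        exact ⟨r, hr, fun G hG => Or.inr (hs G hG)⟩
    obtain ⟨r, hr, hs⟩ := hstab
    obtain ⟨k, hk⟩ := eventually_atTop.mp (hF.eventually_lt_const hr)
    refine mem_iUnion.mpr ⟨k, hp1, ?_⟩
    simp only [mem_iInter, mem_Ici]
    intro n hn
    exact hs _ (hk n hn)
  have hmono : Monotone D := fun i j hij =>
    inter_subset_inter_right _ (biInter_subset_biInter_left (Ici_subset_Ici.mpr hij))
  have hDle : ∀ k, m (D k) ≤ 1 - ε := by
    intro k
    have h1 : m (D k) ≤ m (phaseSpace N A ∩ EE (Fs k)) := by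
      refine measure_mono (inter_subset_inter_right _ fun x hx => ?_)
      exact mem_iInter₂.mp hx k (mem_Ici.mpr le_rfl)
    have h2 : m (phaseSpace N A ∩ EE (Fs k)) + ε ≤ 1 :=
      calc m (phaseSpace N A ∩ EE (Fs k)) + ε
          ≤ m (phaseSpace N A ∩ EE (Fs k)) + m (Indiff (Fs k)) := add_le_add_right (hmem k) _
        _ = 1 := key (Fs k)
    exact h1.trans (ENNReal.le_sub_of_add_le_right (hε1.trans_lt ENNReal.one_lt_top).ne h2)
  have hb : m (phaseSpace N A ∩ EE F) ≤ 1 - ε := by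
    calc m (phaseSpace N A ∩ EE F) ≤ m (⋃ k, D k) := measure_mono hsub
      _ = ⨆ k, m (D k) := hmono.directed_le.measure_iUnion
      _ ≤ 1 - ε := iSup_le hDle
  have hne : m (phaseSpace N A ∩ EE F) ≠ ⊤ :=
    (((measure_mono inter_subset_left).trans_eq hm1).trans_lt ENNReal.one_lt_top).ne
  have hfin : ε + m (phaseSpace N A ∩ EE F) ≤ m (Indiff F) + m (phaseSpace N A ∩ EE F) :=
    calc ε + m (phaseSpace N A ∩ EE F) ≤ ε + (1 - ε) := add_le_add_right hb _
      _ = 1 := add_tsub_cancel_of_le hε1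
      _ = m (Indiff F) + m (phaseSpace N A ∩ EE F) := by rw [← key F, add_comm]
  exact (ENNReal.add_le_add_iff_right hne).mp hfin

end SkewPaper
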